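/- Let A be a symmetric positive definite n×n matrix. The tangent space at A to the manifold F = {R A : R ∈ SO(n)} equals {S A : S skew-symmetric}, and its orthogonal complement in R^{n×n} (with the Frobenius inner product) equals {S A^{-1} : S symmetric}. -/

import Mathlib

open Matrix

attribute [local instance] Matrix.frobeniusNormedAddCommGroup Matrix.frobeniusNormedSpace

/-- The special orthogonal group `SO(n)` as a set of matrices. -/
def SOn (n : ℕ) : Set (Matrix (Fin n) (Fin n) ℝ) :=
  {R | Rᵀ * R = 1 ∧ R.det = 1}

/-- The Frobenius inner product `F : G = tr(Fᵀ G)` on `ℝ^{n×n}`. -/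
noncomputable def frob {n : ℕ} (F G : Matrix (Fin n) (Fin n) ℝ) : ℝ :=
  Matrix.trace (Fᵀ * G)

attribute [local instance] Matrix.frobeniusNormedRing Matrix.frobeniusNormedAlgebra

open NormedSpace in
/-- exponential of a skew-symmetric matrix lies in `SO(n)`. -/
lemma exp_skew_mem_SOn {n : ℕ} (S : Matrix (Fin n) (Fin n) ℝ) (hS : Sᵀ = -S) :
    exp S ∈ SOn n := by
  have h1 : exp (Sᵀ) = (exp S)ᵀ := Matrix.exp_transpose S
  have h2 : exp ((-S) + S) = exp (-S) * exp S :=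
    Matrix.exp_add_of_commute (-S) S (Commute.neg_left rfl)
  have h0 : exp (0 : Matrix (Fin n) (Fin n) ℝ) = 1 := exp_zero
  have hT : (exp S)ᵀ * exp S = 1 := by
    rw [← h1, hS, ← h2, neg_add_cancel, h0]
  refine ⟨hT, ?_⟩
  have hsq : ((exp S).det) ^ 2 = 1 := by
    have := congrArg Matrix.det hT
    rwa [Matrix.det_mul, Matrix.det_transpose, ← sq, Matrix.det_one] at this
  have hpos : 0 ≤ (exp S).det := by
    have h3 : exp ((2:ℝ)⁻¹ • S + (2:ℝ)⁻¹ • S) = exp ((2:ℝ)⁻¹ • S) * exp ((2:ℝ)⁻¹ • S) :=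
      Matrix.exp_add_of_commute _ _ rfl
    have h4 : (2:ℝ)⁻¹ • S + (2:ℝ)⁻¹ • S = S := by
      rw [← two_smul ℝ, smul_smul]; norm_num
    rw [h4] at h3
    rw [h3, Matrix.det_mul, ← sq]
    positivity
  nlinarith [hsq, hpos]

/-- trace (Sᵀ * S) = 0 implies S = 0 over ℝ. -/
lemma eq_zero_of_trace_transpose_mul_self {n : ℕ} {S : Matrix (Fin n) (Fin n) ℝ}
    (h : Matrix.trace (Sᵀ * S) = 0) : S = 0 := by
  have hs : ∑ i, ∑ j, S j i * S j i = 0 := by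
    simpa [Matrix.trace, Matrix.diag, Matrix.mul_apply, Matrix.transpose_apply] using h
  have key : ∀ i ∈ Finset.univ, ∀ j ∈ Finset.univ, S j i * S j i = 0 := by
    have := (Finset.sum_eq_zero_iff_of_nonneg (fun i _ =>
      Finset.sum_nonneg (fun j _ => mul_self_nonneg (S j i)))).mp hs
    intro i hi j hj
    exact (Finset.sum_eq_zero_iff_of_nonneg (fun j _ => mul_self_nonneg (S j i))).mp
      (this i hi) j hj
  ext i j
  have := key j (Finset.mem_univ _) i (Finset.mem_univ _)
  exact mul_self_eq_zero.mp this

/-- orthogonality of skew and symmetric matrices. -/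
lemma trace_skew_symm {n : ℕ} {K M : Matrix (Fin n) (Fin n) ℝ}
    (hK : Kᵀ = -K) (hM : Mᵀ = M) : Matrix.trace (Kᵀ * M) = 0 := by
  have h1 : Matrix.trace (Kᵀ * M) = -Matrix.trace (K * M) := by
    rw [hK]; simp [Matrix.trace_neg]
  have h2 : Matrix.trace (K * M) = -Matrix.trace (K * M) := by
    conv_lhs => rw [← Matrix.trace_transpose, Matrix.transpose_mul, hM, hK,
      Matrix.trace_mul_comm]
    simp [Matrix.trace_neg]
  have : Matrix.trace (K * M) = 0 := by linarith
  rw [h1, this, neg_zero]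

noncomputable def transCLM (n : ℕ) : Matrix (Fin n) (Fin n) ℝ →L[ℝ] Matrix (Fin n) (Fin n) ℝ :=
  LinearMap.toContinuousLinearMap (Matrix.transposeLinearEquiv (Fin n) (Fin n) ℝ ℝ).toLinearMap

theorem tangent_space_of_energy_well
    (n : ℕ) (A : Matrix (Fin n) (Fin n) ℝ) (hA_symm : A.IsSymm) (hA_pos : A.PosDef) :
    ({F | ∃ γ : ℝ → Matrix (Fin n) (Fin n) ℝ,
        (∀ t, ∃ R ∈ SOn n, γ t = R * A) ∧ γ 0 = A ∧ HasDerivAt γ F 0}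
      = {F | ∃ S : Matrix (Fin n) (Fin n) ℝ, Sᵀ = -S ∧ F = S * A}) ∧
    ({G | ∀ S : Matrix (Fin n) (Fin n) ℝ, Sᵀ = -S → frob (S * A) G = 0}
      = {G | ∃ S : Matrix (Fin n) (Fin n) ℝ, S.IsSymm ∧ G = S * A⁻¹}) := by
  have hdet : IsUnit A.det := (ne_of_gt hA_pos.det_pos).isUnit
  have hAi : A * A⁻¹ = 1 := A.mul_nonsing_inv hdet
  have hiA : A⁻¹ * A = 1 := A.nonsing_inv_mul hdet
  have hAT : Aᵀ = A := hA_symm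
  constructor
  · ext F
    simp only [Set.mem_setOf_eq]
    constructor
    · rintro ⟨γ, hmem, h0, hd⟩
      set ρ : ℝ → Matrix (Fin n) (Fin n) ℝ := fun t => γ t * A⁻¹ with hρ
      have hρd : HasDerivAt ρ (F * A⁻¹) 0 := hd.mul_const _
      have hρT : HasDerivAt (fun t => (ρ t)ᵀ) ((F * A⁻¹)ᵀ) 0 :=
        (transCLM n).hasFDerivAt.comp_hasDerivAt 0 hρd
      have hconst : (fun t => (ρ t)ᵀ * ρ t) = fun _ => (1 : Matrix (Fin n) (Fin n) ℝ) := by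
        funext t
        obtain ⟨R, ⟨hR1, _⟩, hγt⟩ := hmem t
        have : ρ t = R := by rw [hρ]; simp [hγt, Matrix.mul_assoc, hAi]
        rw [this, hR1]
      have hprod : HasDerivAt (fun t => (ρ t)ᵀ * ρ t)
          ((F * A⁻¹)ᵀ * ρ 0 + (ρ 0)ᵀ * (F * A⁻¹)) 0 := hρT.mul hρd
      have hρ0 : ρ 0 = 1 := by rw [hρ]; simp [h0, hAi]
      rw [hconst] at hprod
      have hzero := hprod.unique (hasDerivAt_const 0 1)
      rw [hρ0] at hzero
      simp only [Matrix.mul_one, Matrix.one_mul, Matrix.transpose_one] at hzero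
      refine ⟨F * A⁻¹, ?_, ?_⟩
      · linear_combination (norm := module) hzero
      · rw [Matrix.mul_assoc, hiA, Matrix.mul_one]
    · rintro ⟨S, hS, hF⟩
      refine ⟨fun t => NormedSpace.exp (t • S) * A, fun t => ?_, ?_, ?_⟩
      · refine ⟨NormedSpace.exp (t • S), exp_skew_mem_SOn _ ?_, rfl⟩
        rw [Matrix.transpose_smul, hS, smul_neg]
      · simp [NormedSpace.exp_zero]
      · have h1 : HasDerivAt (fun u : ℝ => NormedSpace.exp (u • S))
            (NormedSpace.exp ((0:ℝ) • S) * S) 0 := hasDerivAt_exp_smul_const S 0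
        have := h1.mul_const A
        simp only [zero_smul, NormedSpace.exp_zero, Matrix.one_mul, ← hF] at this
        exact this
  · ext G
    simp only [Set.mem_setOf_eq]
    constructor
    · intro h
      set M := G * A with hM
      have key : ∀ K : Matrix (Fin n) (Fin n) ℝ, Kᵀ = -K → Matrix.trace (Kᵀ * M) = 0 := by
        intro K hK
        have := h K hK
        rw [frob, Matrix.transpose_mul, hAT] at this
        calc Matrix.trace (Kᵀ * M) = Matrix.trace (Kᵀ * G * A) := by rw [hM, Matrix.mul_assoc]
          _ = Matrix.trace (A * Kᵀ * G) := by rw [Matrix.trace_mul_comm, Matrix.mul_assoc]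
          _ = 0 := this
      have hKskew : (M - Mᵀ)ᵀ = -(M - Mᵀ) := by
        rw [Matrix.transpose_sub, Matrix.transpose_transpose]; abel
      have hMsym : Mᵀ = M := by
        have h0 := key (M - Mᵀ) hKskew
        have hKM : Matrix.trace ((M - Mᵀ) * M) = 0 := by
          rw [hKskew, Matrix.neg_mul, Matrix.trace_neg, neg_eq_zero] at h0
          exact h0
        have hKM2 : Matrix.trace ((M - Mᵀ) * Mᵀ) = 0 := by
          have : Matrix.trace ((M - Mᵀ) * Mᵀ) = Matrix.trace (M * (Mᵀ - M)) := by
            rw [← Matrix.trace_transpose ((M - Mᵀ) * Mᵀ), Matrix.transpose_mul,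
              Matrix.transpose_transpose, Matrix.transpose_sub, Matrix.transpose_transpose]
          rw [this, Matrix.trace_mul_comm, ← neg_sub M Mᵀ, Matrix.neg_mul,
            Matrix.trace_neg, hKM, neg_zero]
        have hTT : Matrix.trace ((M - Mᵀ)ᵀ * (M - Mᵀ)) = 0 := by
          rw [hKskew, Matrix.neg_mul, Matrix.trace_neg, Matrix.mul_sub, Matrix.trace_sub,
            hKM, hKM2, sub_zero, neg_zero]
        have := eq_zero_of_trace_transpose_mul_self hTT
        have : M - Mᵀ = 0 := this
        linear_combination (norm := module) -this
      refine ⟨M, hMsym, ?_⟩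
      rw [hM, Matrix.mul_assoc, hAi, Matrix.mul_one]
    · rintro ⟨S, hS, hG⟩ K hK
      rw [hG, frob, Matrix.transpose_mul, hAT]
      calc Matrix.trace (A * Kᵀ * (S * A⁻¹))
          = Matrix.trace (A⁻¹ * (A * Kᵀ) * S) := by
            rw [← Matrix.mul_assoc, Matrix.trace_mul_comm, ← Matrix.mul_assoc]
        _ = Matrix.trace (Kᵀ * S) := by
            rw [← Matrix.mul_assoc, hiA, Matrix.one_mul]
        _ = 0 := trace_skew_symm hK hS
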